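/- There is no integer β₁, β₂ solving β₂^3 + 2(-β₁)^3 = 1 other than (β₁, β₂) = (-1, -1) and (β₁,β₂)=(0,1) [i.e. the equation x^3 + 2y^3 = 1 has only the integer solutions (1,0) and (-1,1)]. Consequently, there is no integer α ∉ {0, 1} such that both α - 1 and 2α - 1 are perfect cubes. -/

import Mathlib

structure Zc where
  a : ℤ
  b : ℤ
  c : ℤ
deriving DecidableEq

namespace Zc

@[ext] lemma ext' {u v : Zc} (ha : u.a = v.a) (hb : u.b = v.b) (hc : u.c = v.c) : u = v := by
  cases u; cases v; simp_all

instance : Add Zc := ⟨fun u v => ⟨u.a + v.a, u.b + v.b, u.c + v.c⟩⟩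
instance : Neg Zc := ⟨fun u => ⟨-u.a, -u.b, -u.c⟩⟩
instance : Mul Zc := ⟨fun u v => ⟨u.a*v.a + 2*u.b*v.c + 2*u.c*v.b,
  u.a*v.b + u.b*v.a + 2*u.c*v.c, u.a*v.c + u.b*v.b + u.c*v.a⟩⟩
instance : Zero Zc := ⟨⟨0,0,0⟩⟩
instance : One Zc := ⟨⟨1,0,0⟩⟩

@[simp] lemma add_def (u v : Zc) : u + v = ⟨u.a + v.a, u.b + v.b, u.c + v.c⟩ := rfl
@[simp] lemma neg_def (u : Zc) : -u = ⟨-u.a, -u.b, -u.c⟩ := rfl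
@[simp] lemma mul_def (u v : Zc) : u * v = ⟨u.a*v.a + 2*u.b*v.c + 2*u.c*v.b,
  u.a*v.b + u.b*v.a + 2*u.c*v.c, u.a*v.c + u.b*v.b + u.c*v.a⟩ := rfl
@[simp] lemma zero_def : (0 : Zc) = ⟨0,0,0⟩ := rfl
@[simp] lemma one_def : (1 : Zc) = ⟨1,0,0⟩ := rfl

instance : CommRing Zc where
  add_assoc u v w := by ext <;> simp <;> ring
  zero_add u := by ext <;> simp
  add_zero u := by ext <;> simp
  add_comm u v := by ext <;> simp <;> ring
  mul_assoc u v w := by ext <;> simp <;> ring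
  one_mul u := by ext <;> simp
  mul_one u := by ext <;> simp
  left_distrib u v w := by ext <;> simp <;> ring
  right_distrib u v w := by ext <;> simp <;> ring
  mul_comm u v := by ext <;> simp <;> ring
  neg_add_cancel u := by ext <;> simp
  zero_mul u := by ext <;> simp
  mul_zero u := by ext <;> simp
  nsmul := nsmulRec
  zsmul := zsmulRec

@[simp] lemma sub_def (u v : Zc) : u - v = ⟨u.a - v.a, u.b - v.b, u.c - v.c⟩ := rfl

/-- The fundamental unit ε = θ - 1 of ℤ[θ], θ = ∛2, with inverse 1 + θ + θ². -/
def E : Zcˣ :=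
  Units.mkOfMulEqOne ⟨-1,1,0⟩ ⟨1,1,1⟩ (by ext <;> simp)

@[simp] lemma E_val : (E : Zc) = ⟨-1,1,0⟩ := rfl
@[simp] lemma E_inv : ((E⁻¹ : Zcˣ) : Zc) = ⟨1,1,1⟩ := rfl

/-- n divides all components. -/
def NDvd (n : ℤ) (w : Zc) : Prop := n ∣ w.a ∧ n ∣ w.b ∧ n ∣ w.c

lemma NDvd.add {n : ℤ} {u v : Zc} (h1 : NDvd n u) (h2 : NDvd n v) : NDvd n (u + v) :=
  ⟨dvd_add h1.1 h2.1, dvd_add h1.2.1 h2.2.1, dvd_add h1.2.2 h2.2.2⟩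

lemma NDvd.mul_left {n : ℤ} (x : Zc) {w : Zc} (h : NDvd n w) : NDvd n (x * w) := by
  obtain ⟨ha, hb, hc⟩ := h
  exact ⟨dvd_add (dvd_add (Dvd.dvd.mul_left ha _) ((Dvd.dvd.mul_left hc _))) (Dvd.dvd.mul_left hb _),
    dvd_add (dvd_add (Dvd.dvd.mul_left hb _) (Dvd.dvd.mul_left ha _)) (Dvd.dvd.mul_left hc _),
    dvd_add (dvd_add (Dvd.dvd.mul_left hc _) (Dvd.dvd.mul_left hb _)) (Dvd.dvd.mul_left ha _)⟩

/-- congruence modulo n, componentwise. -/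
def MEq (n : ℤ) (u v : Zc) : Prop := NDvd n (u - v)

lemma MEq.refl (n : ℤ) (u : Zc) : MEq n u u := by simp [MEq, NDvd]

lemma MEq.of_eq (n : ℤ) {u v : Zc} (h : u = v) : MEq n u v := h ▸ MEq.refl n u

lemma MEq.trans {n : ℤ} {u v w : Zc} (h1 : MEq n u v) (h2 : MEq n v w) : MEq n u w := by
  have := h1.add h2
  simpa [MEq, sub_add_sub_cancel] using this

lemma MEq.mul {n : ℤ} {u v u' v' : Zc} (h1 : MEq n u u') (h2 : MEq n v v') :
    MEq n (u * v) (u' * v') := by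
  have key : u * v - u' * v' = u * (v - v') + (u - u') * v' := by ring
  unfold MEq at *
  rw [key]
  exact (NDvd.mul_left u h2).add (by rw [mul_comm]; exact NDvd.mul_left v' h1)

def P0 (p w0 w1 w2 : ℤ) : ℤ := w0 + -4*p + 12*p*w2 + -12*p*w1 + 36*p*w1*w2 + 9*p*w0^2 + -2*p^2 + 36*p^2*w2 + -108*p^2*w2^2 + 108*p^2*w2^3 + 18*p^2*w1 + 54*p^2*w1^2 + 54*p^2*w1^3 + -36*p^2*w0 + 108*p^2*w0*w2 + -108*p^2*w0*w1 + 324*p^2*w0*w1*w2 + 27*p^2*w0^3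
def P1 (p w0 w1 w2 : ℤ) : ℤ := w1 + 2*p + -12*p*w2 + 18*p*w2^2 + 6*p*w0 + 18*p*w0*w1 + -6*p^2 + 18*p^2*w2 + -36*p^2*w1 + 108*p^2*w1*w2 + -54*p^2*w1^2 + 162*p^2*w1^2*w2 + 18*p^2*w0 + -108*p^2*w0*w2 + 162*p^2*w0*w2^2 + 27*p^2*w0^2 + 81*p^2*w0^2*w1
def P2 (p w0 w1 w2 : ℤ) : ℤ := w2 + p + 6*p*w1 + 9*p*w1^2 + -6*p*w0 + 18*p*w0*w2 + 6*p^2 + -36*p^2*w2 + 54*p^2*w2^2 + 18*p^2*w1 + -108*p^2*w1*w2 + 162*p^2*w1*w2^2 + 9*p^2*w0 + 54*p^2*w0*w1 + 81*p^2*w0*w1^2 + -27*p^2*w0^2 + 81*p^2*w0^2*w2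

/-- Explicit cube formula used for the induction `Q`. -/
lemma cube_formula (p w0 w1 w2 : ℤ) :
    (⟨1 + 9*p*w0, 3*p + 9*p*w1, -(3*p) + 9*p*w2⟩ : Zc) * ⟨1 + 9*p*w0, 3*p + 9*p*w1, -(3*p) + 9*p*w2⟩
      * ⟨1 + 9*p*w0, 3*p + 9*p*w1, -(3*p) + 9*p*w2⟩ =
    ⟨1 + 27*p*(P0 p w0 w1 w2), 9*p + 27*p*(P1 p w0 w1 w2), -(9*p) + 27*p*(P2 p w0 w1 w2)⟩ := by
  ext <;> simp only [mul_def, P0, P1, P2] <;> ring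

/-- Q(t): ε^(3^(t+1)) ≡ 1 - 3^(t+1)·λ  (mod 3^(t+2)), in explicit form. -/
lemma Q (t : ℕ) : ∃ w0 w1 w2 : ℤ,
    ((E : Zc) ^ (3 ^ (t+1) : ℕ)) =
      ⟨1 + 9*3^t*w0, 3*3^t + 9*3^t*w1, -(3*3^t) + 9*3^t*w2⟩ := by
  induction t with
  | zero =>
    refine ⟨0, 0, 0, ?_⟩
    decide
  | succ t ih =>
    obtain ⟨w0, w1, w2, hw⟩ := ih
    have hpow : ((E : Zc) ^ (3 ^ (t+2) : ℕ)) =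
        ((E : Zc) ^ (3 ^ (t+1) : ℕ)) * ((E : Zc) ^ (3 ^ (t+1) : ℕ)) * ((E : Zc) ^ (3 ^ (t+1) : ℕ)) := by
      rw [← pow_add, ← pow_add]
      congr 1
      ring
    rw [hpow, hw, cube_formula (3^t) w0 w1 w2]
    exact ⟨P0 (3^t) w0 w1 w2, P1 (3^t) w0 w1 w2, P2 (3^t) w0 w1 w2,
      by ext <;> simp only [pow_succ] <;> ring⟩

/-- value of an integer power of E -/
noncomputable def Ep (k : ℤ) : Zc := ((E ^ k : Zcˣ) : Zc)

lemma Ep_add (x y : ℤ) : Ep (x + y) = Ep x * Ep y := by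
  simp [Ep, zpow_add]

lemma Ep_natCast (n : ℕ) : Ep (n : ℤ) = (E : Zc) ^ n := by
  simp [Ep, zpow_natCast]

lemma MEq.unit_inv {n : ℤ} (u : Zcˣ) {y : Zc} (h : MEq n ((u : Zc) * y) 1) :
    MEq n ((u⁻¹ : Zcˣ) : Zc) y := by
  have key : ((u⁻¹ : Zcˣ) : Zc) - y = ((u⁻¹ : Zcˣ) : Zc) * (1 - (u : Zc) * y) := by
    have : ((u⁻¹ : Zcˣ) : Zc) * (u : Zc) = 1 := by
      rw [← Units.val_mul]; simp
    calc ((u⁻¹ : Zcˣ) : Zc) - y = ((u⁻¹ : Zcˣ) : Zc) * 1 - (((u⁻¹ : Zcˣ) : Zc) * (u : Zc)) * y := by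
          rw [this, mul_one, one_mul]
      _ = ((u⁻¹ : Zcˣ) : Zc) * (1 - (u : Zc) * y) := by ring
  unfold MEq
  rw [key]
  refine NDvd.mul_left _ ?_
  have h1 := h.1
  have h2 := h.2.1
  have h3 := h.2.2
  simp only [sub_def, one_def] at h1 h2 h3 ⊢
  exact ⟨by simpa [neg_sub] using (dvd_neg.mpr h1), by simpa [neg_sub] using (dvd_neg.mpr h2),
    by simpa [neg_sub] using (dvd_neg.mpr h3)⟩

lemma Qpos (t : ℕ) : MEq (9*3^t) (Ep (3^(t+1))) ⟨1, 3*3^t, -(3*3^t)⟩ := by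
  obtain ⟨w0, w1, w2, hw⟩ := Q t
  have : Ep (3^(t+1)) = (E : Zc) ^ (3^(t+1) : ℕ) := by
    rw [← Ep_natCast]; norm_num
  rw [this, hw]
  exact ⟨⟨w0, by simp only [sub_def]; ring⟩, ⟨w1, by simp only [sub_def]; ring⟩, ⟨w2, by simp only [sub_def]; ring⟩⟩

lemma Qneg (t : ℕ) : MEq (9*3^t) (Ep (-(3^(t+1)))) ⟨1, -(3*3^t), 3*3^t⟩ := by
  have h1 : MEq (9*3^t) (Ep (3^(t+1)) * ⟨1, -(3*3^t), 3*3^t⟩) 1 := by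
    have h2 := (Qpos t).mul (MEq.refl (9*3^t) ⟨1, -(3*3^t), 3*3^t⟩)
    refine h2.trans ?_
    refine ⟨⟨4*3^t, by simp only [mul_def, one_def, sub_def]; ring⟩,
      ⟨-(2*3^t), by simp only [mul_def, one_def, sub_def]; ring⟩,
      ⟨-(3^t : ℤ), by simp only [mul_def, one_def, sub_def]; ring⟩⟩
  have : Ep (-(3^(t+1))) = (((E ^ ((3:ℤ)^(t+1)))⁻¹ : Zcˣ) : Zc) := by
    simp [Ep, zpow_neg]
  rw [this]
  exact MEq.unit_inv _ h1

lemma Plem (t : ℕ) (s : ℤ) : MEq (9*3^t) (Ep (3^(t+1)*s)) ⟨1, 3*3^t*s, -(3*3^t*s)⟩ := by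
  induction s using Int.induction_on with
  | zero =>
    rw [mul_zero]
    refine MEq.of_eq _ ?_
    ext <;> simp [Ep]
  | succ n ih =>
    have hsplit : (3:ℤ)^(t+1)*((n:ℤ)+1) = 3^(t+1)*(n:ℤ) + 3^(t+1) := by ring
    rw [hsplit, Ep_add]
    have := ih.mul (Qpos t)
    refine this.trans ?_
    refine ⟨⟨-(4*3^t*n), by simp only [mul_def, sub_def]; push_cast; ring⟩,
      ⟨2*3^t*n, by simp only [mul_def, sub_def]; push_cast; ring⟩,
      ⟨3^t*n, by simp only [mul_def, sub_def]; push_cast; ring⟩⟩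
  | pred n ih =>
    have hsplit : (3:ℤ)^(t+1)*(-(n:ℤ)-1) = 3^(t+1)*(-(n:ℤ)) + -(3^(t+1)) := by ring
    rw [hsplit, Ep_add]
    have := ih.mul (Qneg t)
    refine this.trans ?_
    refine ⟨⟨-(4*3^t*n), by simp only [mul_def, sub_def]; push_cast; ring⟩,
      ⟨2*3^t*n, by simp only [mul_def, sub_def]; push_cast; ring⟩,
      ⟨3^t*n, by simp only [mul_def, sub_def]; push_cast; ring⟩⟩

lemma Ep_one : Ep 1 = ⟨-1,1,0⟩ := by simp [Ep]

lemma Ep_two : Ep 2 = ⟨1,-2,1⟩ := by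
  have h : Ep 2 = Ep 1 * Ep 1 := by rw [← Ep_add]; norm_num
  rw [h, Ep_one]
  ext <;> simp

lemma dvd_s_of {t : ℕ} {s : ℤ} (h : (9*3^t : ℤ) ∣ 3*3^t*s) : 3 ∣ s := by
  obtain ⟨d, hd⟩ := h
  refine ⟨d, ?_⟩
  have h3 : (3*3^t : ℤ) ≠ 0 := by positivity
  apply mul_left_cancel₀ h3
  linarith [hd]

lemma pow_dvd_zero {m : ℤ} (h : ∀ t : ℕ, (3^t : ℤ) ∣ m) : m = 0 := by
  by_contra hm
  have h1 := h m.natAbs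
  have h2 : m.natAbs < ((3:ℤ)^m.natAbs).natAbs := by
    rw [Int.natAbs_pow]
    exact Nat.lt_pow_self (by norm_num)
  exact hm (Int.eq_zero_of_dvd_of_natAbs_lt_natAbs h1 h2)

lemma aux0 {m : ℤ} (hc : (Ep (3*m)).c = 0) : m = 0 := by
  apply pow_dvd_zero
  intro t
  induction t with
  | zero => exact one_dvd m
  | succ t ih =>
    obtain ⟨s, hs⟩ := ih
    have hm : (3:ℤ)^(t+1)*s = 3*m := by rw [hs]; ring
    have hP := Plem t s
    rw [hm] at hP
    have h3 := hP.2.2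
    simp only [sub_def, hc] at h3
    have : (9*3^t : ℤ) ∣ 3*3^t*s := by
      have := (dvd_neg.mpr h3)
      simpa using this
    obtain ⟨d, hd⟩ := dvd_s_of this
    exact ⟨d, by rw [hs, hd, pow_succ]; ring⟩

lemma aux1 {m : ℤ} (hc : (Ep (3*m+1)).c = 0) : m = 0 := by
  apply pow_dvd_zero
  intro t
  induction t with
  | zero => exact one_dvd m
  | succ t ih =>
    obtain ⟨s, hs⟩ := ih
    have hm : (3:ℤ)^(t+1)*s = 3*m := by rw [hs]; ring
    have hP := (Plem t s).mul (MEq.refl (9*3^t) ⟨-1,1,0⟩)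
    rw [hm, ← Ep_one, ← Ep_add] at hP
    have h3 := hP.2.2
    simp only [sub_def, hc, Ep_one, mul_def] at h3
    -- h3 : 9*3^t ∣ 0 - (2 * (3*3^t*s)) roughly
    have h4 : (9*3^t : ℤ) ∣ 2*(3*3^t*s) := by
      have := (dvd_neg.mpr h3)
      simp only [neg_sub, sub_zero] at this ⊢
      convert this using 1
      · rfl
      · ring
    have h5 : (9*3^t : ℤ) ∣ 3*3^t*(2*s) := by convert h4 using 1; ring
    have h6 : (3:ℤ) ∣ 2*s := dvd_s_of h5
    have h7 : (3:ℤ) ∣ s := by omega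
    obtain ⟨d, hd⟩ := h7
    exact ⟨d, by rw [hs, hd, pow_succ]; ring⟩

lemma aux2 (m : ℤ) : (Ep (3*m+2)).c ≠ 0 := by
  intro hc
  have hP := (Plem 0 m).mul (MEq.refl (9*3^0) ⟨1,-2,1⟩)
  have hm : (3:ℤ)^(0+1)*m = 3*m := by ring
  rw [hm, ← Ep_two, ← Ep_add] at hP
  have h3 := hP.2.2
  simp only [sub_def, hc, mul_def, Ep_two] at h3
  obtain ⟨d, hd⟩ := h3
  simp only [pow_zero, mul_one] at hd
  omega

/-- The key Skolem-style result: if the θ²-coefficient of ε^k vanishes then k = 0 or 1. -/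
theorem skolem (k : ℤ) (hc : (Ep k).c = 0) : k = 0 ∨ k = 1 := by
  have hk : k = 3*(k/3) + k % 3 := by omega
  have hr : k % 3 = 0 ∨ k % 3 = 1 ∨ k % 3 = 2 := by omega
  rcases hr with h | h | h
  · left
    have : k = 3*(k/3) := by omega
    rw [this] at hc
    have := aux0 hc
    omega
  · right
    have : k = 3*(k/3) + 1 := by omega
    rw [this] at hc
    have := aux1 hc
    omega
  · exfalso
    have : k = 3*(k/3) + 2 := by omega
    rw [this] at hc
    exact aux2 _ hc

section Analytic
open Complex

noncomputable def th : ℝ := (2 : ℝ) ^ ((1:ℝ)/3)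

lemma th_pos : 0 < th := Real.rpow_pos_of_pos (by norm_num) _

lemma th_cube : th ^ 3 = 2 := by
  rw [th, ← Real.rpow_natCast ((2:ℝ) ^ ((1:ℝ)/3)) 3, ← Real.rpow_mul (by norm_num)]
  norm_num

lemma th_gt : 1.25 < th := by
  by_contra h
  push_neg at h
  have h2 : th ^ 3 ≤ (1.25:ℝ) ^ 3 := pow_le_pow_left₀ th_pos.le h 3
  rw [th_cube] at h2
  norm_num at h2

lemma th_lt : th < 1.26 := by
  by_contra h
  push_neg at h
  have h2 : (1.26:ℝ) ^ 3 ≤ th ^ 3 := pow_le_pow_left₀ (by norm_num) h 3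
  rw [th_cube] at h2
  norm_num at h2

/-- the real embedding of ℤ[θ]. -/
noncomputable def f : Zc →+* ℝ where
  toFun u := (u.a : ℝ) + u.b * th + u.c * th ^ 2
  map_one' := by simp
  map_zero' := by simp
  map_add' u v := by simp only [add_def]; push_cast; ring
  map_mul' u v := by
    simp only [mul_def]
    push_cast
    linear_combination (-((u.b:ℝ)*v.c + u.c*v.b) - (u.c:ℝ)*v.c*th) * th_cube

lemma f_apply (u : Zc) : f u = (u.a : ℝ) + u.b * th + u.c * th ^ 2 := rfl

noncomputable def om : ℂ := ⟨-1/2, Real.sqrt 3 / 2⟩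

lemma om_rel : om ^ 2 + om + 1 = 0 := by
  have h3 : Real.sqrt 3 ^ 2 = 3 := Real.sq_sqrt (by norm_num)
  apply Complex.ext <;>
    simp [om, pow_two, Complex.mul_re, Complex.mul_im, Complex.add_re, Complex.add_im] <;>
    nlinarith [h3]

lemma om_cube : om ^ 3 = 1 := by linear_combination (om - 1) * om_rel

lemma conj_om : (starRingEnd ℂ) om = om ^ 2 := by
  have h3 : Real.sqrt 3 ^ 2 = 3 := Real.sq_sqrt (by norm_num)
  apply Complex.ext <;>
    simp [om, pow_two, Complex.mul_re, Complex.mul_im] <;> nlinarith [h3]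

lemma normSq_om : Complex.normSq om = 1 := by
  have h3 : Real.sqrt 3 ^ 2 = 3 := Real.sq_sqrt (by norm_num)
  simp [om, Complex.normSq_apply]
  nlinarith [h3]

lemma thC_cube : ((th : ℂ)) ^ 3 = 2 := by
  rw [← Complex.ofReal_pow, th_cube]
  norm_num

lemma tau_cube : ((th : ℂ) * om) ^ 3 = 2 := by
  rw [mul_pow, om_cube, thC_cube, mul_one]

/-- the complex embedding of ℤ[θ]. -/
noncomputable def g : Zc →+* ℂ where
  toFun u := (u.a : ℂ) + u.b * ((th:ℂ) * om) + u.c * ((th:ℂ) * om) ^ 2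
  map_one' := by simp
  map_zero' := by simp
  map_add' u v := by simp only [add_def]; push_cast; ring
  map_mul' u v := by
    simp only [mul_def]
    push_cast
    linear_combination (-((u.b:ℂ)*v.c + u.c*v.b) - (u.c:ℂ)*v.c*((th:ℂ)*om)) * tau_cube

lemma g_apply (u : Zc) : g u = (u.a : ℂ) + u.b * ((th:ℂ) * om) + u.c * ((th:ℂ) * om) ^ 2 := rfl

lemma conj_g (u : Zc) :
    (starRingEnd ℂ) (g u) = (u.a : ℂ) + u.b * ((th:ℂ) * om ^ 2) + u.c * ((th:ℂ) * om ^ 2) ^ 2 := by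
  rw [g_apply]
  simp only [map_add, map_mul, map_pow, map_intCast, Complex.conj_ofReal, conj_om]

/-- the norm form. -/
def Nm : Zc →* ℤ where
  toFun u := u.a^3 + 2*u.b^3 + 4*u.c^3 - 6*u.a*u.b*u.c
  map_one' := by simp
  map_mul' u v := by simp only [mul_def]; ring

lemma Nm_apply (u : Zc) : Nm u = u.a^3 + 2*u.b^3 + 4*u.c^3 - 6*u.a*u.b*u.c := rfl

lemma norm_identity (u : Zc) :
    ((f u : ℝ) : ℂ) * (g u * (starRingEnd ℂ) (g u)) = ((Nm u : ℤ) : ℂ) := by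
  rw [conj_g, g_apply, f_apply, Nm_apply]
  push_cast
  set A := (u.a : ℂ)
  set B := (u.b : ℂ)
  set C := (u.c : ℂ)
  set T := (th : ℂ)
  set W := om
  linear_combination ((-1)*C^3*T^6 + C^3*T^6*W + (-1)*C^3*T^6*W^3 + C^3*T^6*W^4
    + B*C^2*T^5*W^4 + B^2*C*T^4*W^3 + (-1)*B^3*T^3 + B^3*T^3*W
    + A*C^2*T^4*W^2 + (-1)*A*C^2*T^4*W^3 + A*C^2*T^4*W^4
    + 3*A*B*C*T^3 + (-2)*A*B*C*T^3*W + A*B*C*T^3*W^2 + A*B*C*T^3*W^3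
    + A*B^2*T^2*W + A^2*C*T^2 + (-1)*A^2*C*T^2*W + A^2*C*T^2*W^2 + A^2*B*T) * om_rel
    + (2*C^3 + C^3*T^3 + B^3 + (-3)*A*B*C) * thC_cube

lemma trace_a (u : Zc) :
    ((f u : ℝ) : ℂ) + (g u + (starRingEnd ℂ) (g u)) = 3 * (u.a : ℂ) := by
  rw [conj_g, g_apply, f_apply]
  push_cast
  linear_combination ((u.c:ℂ)*(th:ℂ)^2 + (-1)*(u.c:ℂ)*(th:ℂ)^2*om + (u.c:ℂ)*(th:ℂ)^2*om^2
    + (u.b:ℂ)*(th:ℂ)) * om_rel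

lemma om_four : om ^ 4 = om := by linear_combination om * om_cube

lemma trace_b (u : Zc) :
    ((f u : ℝ) : ℂ) + (om^2 * g u + (starRingEnd ℂ) (om^2 * g u)) = 3 * (u.b : ℂ) * (th:ℂ) := by
  have hco : (starRingEnd ℂ) (om^2 * g u) = om * (starRingEnd ℂ) (g u) := by
    rw [map_mul, map_pow, conj_om]
    congr 1
    linear_combination om * om_cube
  rw [hco, conj_g, g_apply, f_apply]
  push_cast
  linear_combination ((u.c:ℂ)*(th:ℂ)^2 + (-1)*(u.c:ℂ)*(th:ℂ)^2*om + (u.c:ℂ)*(th:ℂ)^2*om^3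
    + (-2)*(u.b:ℂ)*(th:ℂ) + 2*(u.b:ℂ)*(th:ℂ)*om + (u.a:ℂ)) * om_rel

lemma trace_c (u : Zc) :
    ((f u : ℝ) : ℂ) + (om * g u + (starRingEnd ℂ) (om * g u)) = 3 * (u.c : ℂ) * (th:ℂ)^2 := by
  have hco : (starRingEnd ℂ) (om * g u) = om^2 * (starRingEnd ℂ) (g u) := by
    rw [map_mul, conj_om]
  rw [hco, conj_g, g_apply, f_apply]
  push_cast
  linear_combination ((-2)*(u.c:ℂ)*(th:ℂ)^2 + 2*(u.c:ℂ)*(th:ℂ)^2*om + (-1)*(u.c:ℂ)*(th:ℂ)^2*om^3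
    + (u.c:ℂ)*(th:ℂ)^2*om^4 + (u.b:ℂ)*(th:ℂ) + (-1)*(u.b:ℂ)*(th:ℂ)*om + (u.b:ℂ)*(th:ℂ)*om^2
    + (u.a:ℂ)) * om_rel

lemma re_sq_le_normSq (z : ℂ) : z.re ^ 2 ≤ Complex.normSq z := by
  rw [Complex.normSq_apply]
  nlinarith [sq_nonneg z.im]

set_option maxHeartbeats 2000000 in
lemma unit_classify (w : Zc) (hN : Nm w = 1) (hV1 : 1 ≤ f w) (hV4 : f w ≤ 4) :
    w = 1 ∨ w = ⟨1,1,1⟩ := by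
  have hth2 : (1.5625 : ℝ) < th ^ 2 := by nlinarith [th_gt]
  have hgg : ((f w : ℝ) : ℂ) * (g w * (starRingEnd ℂ) (g w)) = 1 := by
    rw [norm_identity, hN]; norm_num
  have hns : f w * Complex.normSq (g w) = 1 := by
    rw [Complex.mul_conj] at hgg
    exact_mod_cast hgg
  have hnsnn : 0 ≤ Complex.normSq (g w) := Complex.normSq_nonneg _
  have hnsle : Complex.normSq (g w) ≤ 1 := by nlinarith
  -- real trace equations
  have hA : f w + 2 * (g w).re = 3 * (w.a : ℝ) := by
    have h := trace_a w
    rw [Complex.add_conj] at h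
    exact_mod_cast h
  have hB : f w + 2 * (om ^ 2 * g w).re = 3 * (w.b : ℝ) * th := by
    have h := trace_b w
    rw [Complex.add_conj] at h
    exact_mod_cast h
  have hC : f w + 2 * (om * g w).re = 3 * (w.c : ℝ) * th ^ 2 := by
    have h := trace_c w
    rw [Complex.add_conj] at h
    exact_mod_cast h
  -- bounds on the real parts
  have hgre : (g w).re ^ 2 ≤ 1 := le_trans (re_sq_le_normSq _) hnsle
  have hb_ns : Complex.normSq (om ^ 2 * g w) ≤ 1 := by
    rw [Complex.normSq_mul, map_pow, normSq_om]
    simpa using hnsle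
  have hc_ns : Complex.normSq (om * g w) ≤ 1 := by
    rw [Complex.normSq_mul, normSq_om]
    simpa using hnsle
  have hbre : (om ^ 2 * g w).re ^ 2 ≤ 1 := le_trans (re_sq_le_normSq _) hb_ns
  have hcre : (om * g w).re ^ 2 ≤ 1 := le_trans (re_sq_le_normSq _) hc_ns
  have hgre1 : -1 ≤ (g w).re ∧ (g w).re ≤ 1 := by
    constructor <;> nlinarith [hgre]
  have hbre1 : -1 ≤ (om ^ 2 * g w).re ∧ (om ^ 2 * g w).re ≤ 1 := by
    constructor <;> nlinarith [hbre]
  have hcre1 : -1 ≤ (om * g w).re ∧ (om * g w).re ≤ 1 := by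
    constructor <;> nlinarith [hcre]
  -- integer bounds on a
  have haR : (-1 : ℝ) ≤ 3 * (w.a : ℝ) ∧ 3 * (w.a : ℝ) ≤ 6 := by
    constructor <;> linarith [hgre1.1, hgre1.2]
  have haZ : 0 ≤ w.a ∧ w.a ≤ 2 := by
    have h1 : (-1 : ℤ) ≤ 3 * w.a := by exact_mod_cast haR.1
    have h2 : (3 : ℤ) * w.a ≤ 6 := by exact_mod_cast haR.2
    omega
  -- integer bounds on b
  have hbR : (-1 : ℝ) ≤ 3 * (w.b : ℝ) * th ∧ 3 * (w.b : ℝ) * th ≤ 6 := by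
    constructor <;> linarith [hbre1.1, hbre1.2]
  have hbZlow : (-1 : ℝ) < (w.b : ℝ) := by
    by_contra hcon
    push_neg at hcon
    have : 3 * (w.b:ℝ) * th ≤ 3 * (-1) * th := by
      have h3 : (0:ℝ) < 3 * th := by linarith [th_gt]
      nlinarith [th_gt]
    linarith [th_gt, hbR.1]
  have hbZhigh : (w.b : ℝ) < 2 := by
    by_contra hcon
    push_neg at hcon
    have : 3 * (2:ℝ) * th ≤ 3 * (w.b:ℝ) * th := by nlinarith [th_gt]
    linarith [th_gt, hbR.2]
  have hbZ : 0 ≤ w.b ∧ w.b ≤ 1 := by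
    have h1 : (-1 : ℤ) < w.b := by exact_mod_cast hbZlow
    have h2 : (w.b : ℤ) < 2 := by exact_mod_cast hbZhigh
    omega
  -- integer bounds on c
  have hcR : (-1 : ℝ) ≤ 3 * (w.c : ℝ) * th ^ 2 ∧ 3 * (w.c : ℝ) * th ^ 2 ≤ 6 := by
    constructor <;> linarith [hcre1.1, hcre1.2]
  have hcZlow : (-1 : ℝ) < (w.c : ℝ) := by
    by_contra hcon
    push_neg at hcon
    have : 3 * (w.c:ℝ) * th ^ 2 ≤ 3 * (-1) * th ^ 2 := by nlinarith [hth2]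
    linarith [hth2, hcR.1]
  have hcZhigh : (w.c : ℝ) < 2 := by
    by_contra hcon
    push_neg at hcon
    have : 3 * (2:ℝ) * th ^ 2 ≤ 3 * (w.c:ℝ) * th ^ 2 := by nlinarith [hth2]
    linarith [hth2, hcR.2]
  have hcZ : 0 ≤ w.c ∧ w.c ≤ 1 := by
    have h1 : (-1 : ℤ) < w.c := by exact_mod_cast hcZlow
    have h2 : (w.c : ℤ) < 2 := by exact_mod_cast hcZhigh
    omega
  -- finite check
  obtain ⟨a, b, c⟩ := w
  simp only [Nm_apply] at hN
  simp only at haZ hbZ hcZ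
  obtain ⟨ha1, ha2⟩ := haZ
  obtain ⟨hb1, hb2⟩ := hbZ
  obtain ⟨hc1, hc2⟩ := hcZ
  interval_cases a <;> interval_cases b <;> interval_cases c <;> first | (left; decide) | (right; decide) | (exfalso; norm_num at hN)

lemma fE : f (E : Zc) = th - 1 := by
  rw [f_apply]
  norm_num [E_val]
  ring

theorem unit_is_power (u : Zcˣ) (hNu : Nm (u : Zc) = 1) : ∃ k : ℤ, ((u : Zcˣ) : Zc) = Ep k := by
  have hgg := norm_identity (u : Zc)
  rw [hNu] at hgg
  have hns : f (u : Zc) * Complex.normSq (g (u : Zc)) = 1 := by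
    rw [Complex.mul_conj] at hgg
    exact_mod_cast hgg
  have hU0 : 0 < f (u : Zc) := by
    rcases lt_trichotomy (f (u : Zc)) 0 with h | h | h
    · nlinarith [Complex.normSq_nonneg (g (u : Zc))]
    · rw [h] at hns; simp at hns
    · exact h
  set e : ℝ := th - 1 with he
  have he0 : 0 < e := by rw [he]; linarith [th_gt]
  have he14 : (1:ℝ)/4 < e := by rw [he]; linarith [th_gt]
  have he1 : e < 1 := by rw [he]; linarith [th_lt]
  have hy : 1 < e⁻¹ := by
    have h4 : e * e⁻¹ = 1 := mul_inv_cancel₀ he0.ne'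
    nlinarith [inv_pos.mpr he0]
  obtain ⟨n, hn1, hn2⟩ := exists_mem_Ioc_zpow hU0 hy
  rw [inv_zpow] at hn1
  rw [inv_zpow] at hn2
  have hfE : f ((E ^ n : Zcˣ) : Zc) = e ^ n := by
    have h2 : f ((E ^ n : Zcˣ) : Zc) = (((Units.map f.toMonoidHom E ^ n : ℝˣ)) : ℝ) := by
      rw [← map_zpow]
      rfl
    rw [h2, Units.val_zpow_eq_zpow_val]
    have h3 : ((Units.map f.toMonoidHom E : ℝˣ) : ℝ) = e := by
      rw [he, ← fE]
      rfl
    rw [h3]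
  have hfw : f ((E ^ n * u : Zcˣ) : Zc) = e ^ n * f (u : Zc) := by
    rw [Units.val_mul, map_mul, hfE]
  have hen0 : (0:ℝ) < e ^ n := zpow_pos he0 n
  have hV1 : 1 ≤ f ((E ^ n * u : Zcˣ) : Zc) := by
    rw [hfw]
    have h5 := mul_lt_mul_of_pos_left hn1 hen0
    rw [mul_inv_cancel₀ hen0.ne'] at h5
    linarith
  have hV4 : f ((E ^ n * u : Zcˣ) : Zc) ≤ 4 := by
    rw [hfw]
    have h2 : e ^ n * f (u : Zc) ≤ e ^ n * (e ^ (n+1))⁻¹ := mul_le_mul_of_nonneg_left hn2 hen0.le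
    have h3 : e ^ n * (e ^ (n+1))⁻¹ = e⁻¹ := by
      rw [zpow_add_one₀ he0.ne']
      field_simp
    rw [h3] at h2
    have h6 : e⁻¹ ≤ 4 := by
      have h4 : e * e⁻¹ = 1 := mul_inv_cancel₀ he0.ne'
      nlinarith [inv_pos.mpr he0]
    linarith
  have hNw : Nm ((E ^ n * u : Zcˣ) : Zc) = 1 := by
    rw [Units.val_mul, map_mul, hNu, mul_one]
    have h1 : Units.map Nm E = 1 := by
      ext
      simp [Nm_apply]
    have h2 : Units.map Nm (E ^ n) = 1 := by rw [map_zpow, h1, one_zpow]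
    exact congrArg Units.val h2
  rcases unit_classify ((E ^ n * u : Zcˣ) : Zc) hNw hV1 hV4 with h | h
  · have hw1 : E ^ n * u = 1 := Units.ext h
    refine ⟨-n, ?_⟩
    have hu : u = E ^ (-n) := by
      rw [zpow_neg]
      exact eq_inv_of_mul_eq_one_right hw1
    rw [hu]; rfl
  · have hw2 : E ^ n * u = E⁻¹ := Units.ext (by rw [h]; rfl)
    refine ⟨-n - 1, ?_⟩
    have hu : u = E ^ (-n - 1) := by
      have h7 : u = (E ^ n)⁻¹ * E⁻¹ := by
        rw [← hw2]
        group
      rw [show (-n - 1 : ℤ) = -n + -1 by ring, zpow_add E, zpow_neg E n, zpow_neg_one]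
      exact h7
    rw [hu]; rfl

theorem thue_main (x y : ℤ) (h : x ^ 3 + 2 * y ^ 3 = 1) :
    (x = 1 ∧ y = 0) ∨ (x = -1 ∧ y = 1) := by
  have hmul : (⟨x, y, 0⟩ : Zc) * ⟨x^2, -(x*y), y^2⟩ = 1 := by
    ext
    case ha => simp only [mul_def, one_def]; linear_combination h
    case hb => simp only [mul_def, one_def]; ring
    case hc => simp only [mul_def, one_def]; ring
  set u : Zcˣ := Units.mkOfMulEqOne _ _ hmul with hu
  have huval : (u : Zc) = ⟨x, y, 0⟩ := rfl
  have hNu : Nm (u : Zc) = 1 := by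
    rw [huval, Nm_apply]
    simp only
    linear_combination h
  obtain ⟨k, hk⟩ := unit_is_power u hNu
  rw [huval] at hk
  have hc : (Ep k).c = 0 := by rw [← hk]
  rcases skolem k hc with rfl | rfl
  · left
    have h0 : Ep 0 = (⟨1,0,0⟩ : Zc) := by simp [Ep]
    rw [h0] at hk
    exact ⟨congrArg Zc.a hk, congrArg Zc.b hk⟩
  · right
    rw [Ep_one] at hk
    exact ⟨congrArg Zc.a hk, congrArg Zc.b hk⟩

end Analytic

end Zc

theorem thue_x3_plus_2y3 :
    (∀ x y : ℤ, x ^ 3 + 2 * y ^ 3 = 1 → (x = 1 ∧ y = 0) ∨ (x = -1 ∧ y = 1)) ∧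
    ¬ ∃ α : ℤ, α ≠ 0 ∧ α ≠ 1 ∧ (∃ b : ℤ, α - 1 = b ^ 3) ∧ (∃ b : ℤ, 2 * α - 1 = b ^ 3) := by
  constructor
  · exact fun x y h => Zc.thue_main x y h
  · rintro ⟨α, h0, h1, ⟨b1, hb1⟩, ⟨b2, hb2⟩⟩
    have h : b2 ^ 3 + 2 * (-b1) ^ 3 = 1 := by linear_combination 2 * hb1 - hb2
    rcases Zc.thue_main b2 (-b1) h with ⟨hx, hy⟩ | ⟨hx, hy⟩
    · have hb10 : b1 = 0 := by omega
      rw [hb10] at hb1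
      norm_num at hb1
      exact h1 (by omega)
    · have hb11 : b1 = -1 := by omega
      rw [hb11] at hb1
      norm_num at hb1
      exact h0 (by omega)
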